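/- Let t₀ < T ∈ ℝ, K > 0, and let λ : [t₀, T) → (0, +∞) be continuous with ∫_{t}^{T} λ(τ)^{−1/2} dτ < +∞ and λ(t)^{1/4} ≤ K·∫_{t}^{T} λ(τ)^{−1/2} dτ for every t ∈ [t₀, T). Then for every t ∈ [t₀, T): ∫_{t}^{T} λ(τ)^{−1/2} dτ ≥ (3/K²)^{1/3}·(T−t)^{1/3}. Moreover, there exist a constant C depending only on K and a sequence tₙ → T such that λ(tₙ) ≤ C·(T−tₙ)^{4/3}. -/

import Mathlib

open Set Filter MeasureTheory
open Topology

/-- The integral inequality used in dimension `N = 3`: if `λ : [t₀,T) → (0,∞)` is continuous,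
`∫_t^T λ^{−1/2} dτ < ∞` and `λ(t)^{1/4} ≤ K ∫_t^T λ(τ)^{−1/2} dτ` for all `t ∈ [t₀,T)`, then
`∫_t^T λ^{−1/2} dτ ≥ (3/K²)^{1/3}(T−t)^{1/3}` on `[t₀,T)`, and there are a constant `C`
(depending only on `K`) and a sequence `tₙ → T` with `λ(tₙ) ≤ C (T−tₙ)^{4/3}`. -/
theorem sequential_blowup_rate_dimension_three
    (t₀ T K : ℝ) (ht : t₀ < T) (hK : 0 < K)
    (lam : ℝ → ℝ)
    (hcont : ContinuousOn lam (Ico t₀ T))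
    (hpos : ∀ t ∈ Ico t₀ T, 0 < lam t)
    (hint : ∀ t ∈ Ico t₀ T, IntegrableOn (fun τ => (lam τ) ^ (-(1:ℝ)/2)) (Ioo t T) volume)
    (hineq : ∀ t ∈ Ico t₀ T,
      (lam t) ^ ((1:ℝ)/4) ≤ K * ∫ τ in Ioo t T, (lam τ) ^ (-(1:ℝ)/2)) :
    (∀ t ∈ Ico t₀ T,
      (3 / K^2) ^ ((1:ℝ)/3) * (T - t) ^ ((1:ℝ)/3)
        ≤ ∫ τ in Ioo t T, (lam τ) ^ (-(1:ℝ)/2)) ∧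
    ∃ C > 0, ∃ tseq : ℕ → ℝ, (∀ n, tseq n ∈ Ico t₀ T) ∧
      Tendsto tseq atTop (nhds T) ∧
      ∀ n, lam (tseq n) ≤ C * (T - tseq n) ^ ((4:ℝ)/3) := by
  set f : ℝ → ℝ := fun τ => (lam τ) ^ (-(1:ℝ)/2) with hfdef
  set ψ : ℝ → ℝ := fun t => ∫ τ in Ioo t T, f τ with hψdef
  -- basic facts about f
  have hf_pos : ∀ τ ∈ Ico t₀ T, 0 < f τ := fun τ hτ => Real.rpow_pos_of_pos (hpos τ hτ) _
  have hf_cont : ContinuousOn f (Ico t₀ T) :=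
    hcont.rpow_const (fun x hx => Or.inl (hpos x hx).ne')
  have hII : ∀ t ∈ Ico t₀ T, IntervalIntegrable f volume t T := fun t h =>
    (intervalIntegrable_iff_integrableOn_Ioo_of_le h.2.le).mpr (hint t h)
  have hII' : ∀ t ∈ Ico t₀ T, IntervalIntegrable f volume t₀ t := by
    intro t h
    exact (hII t₀ ⟨le_refl _, ht⟩).mono_set
      (uIcc_subset_uIcc (by rw [uIcc_of_le ht.le]; exact ⟨le_refl _, ht.le⟩)
        (by rw [uIcc_of_le ht.le]; exact ⟨h.1, h.2.le⟩))
  have hψ_eq : ∀ t ∈ Ico t₀ T, ψ t = ∫ τ in t..T, f τ := by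
    intro t h
    rw [hψdef]
    rw [intervalIntegral.integral_of_le h.2.le, integral_Ioc_eq_integral_Ioo]
  have hψ_nonneg : ∀ t ∈ Ico t₀ T, 0 ≤ ψ t := by
    intro t h
    exact setIntegral_nonneg measurableSet_Ioo
      (fun τ hτ => (hf_pos τ ⟨le_trans h.1 hτ.1.le, hτ.2⟩).le)
  have hψ_pos : ∀ t ∈ Ico t₀ T, 0 < ψ t := by
    intro t h
    have h1 := hineq t h
    have h2 : (0:ℝ) < lam t ^ ((1:ℝ)/4) := Real.rpow_pos_of_pos (hpos t h) _
    nlinarith [hψ_nonneg t h]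
  -- key pointwise inequality: 1/K² ≤ ψ(t)² f(t)
  have hkey : ∀ t ∈ Ico t₀ T, 1 / K^2 ≤ ψ t ^ 2 * f t := by
    intro t h
    have ha : 0 < lam t := hpos t h
    have h1 : lam t ^ ((1:ℝ)/4) ≤ K * ψ t := hineq t h
    have ha4 : (0:ℝ) < lam t ^ ((1:ℝ)/4) := Real.rpow_pos_of_pos ha _
    have hsq : (lam t ^ ((1:ℝ)/4)) ^ 2 = lam t ^ ((1:ℝ)/2) := by
      rw [← Real.rpow_natCast (lam t ^ ((1:ℝ)/4)) 2, ← Real.rpow_mul ha.le]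
      norm_num
    have hf_eq : f t = ((lam t ^ ((1:ℝ)/4)) ^ 2)⁻¹ := by
      rw [hsq, ← Real.rpow_neg ha.le]
      norm_num [hfdef, neg_div]
    rw [hf_eq]
    have hψt := hψ_pos t h
    have h2 : (lam t ^ ((1:ℝ)/4))^2 ≤ (K * ψ t)^2 := by nlinarith
    have h4 : ((K * ψ t)^2)⁻¹ ≤ ((lam t ^ ((1:ℝ)/4))^2)⁻¹ :=
      inv_anti₀ (by positivity) h2
    have h5 : 1/K^2 = ψ t ^2 * ((K * ψ t)^2)⁻¹ := by
      rw [mul_pow]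
      field_simp
    rw [h5]
    exact mul_le_mul_of_nonneg_left h4 (by positivity)
  -- the primitive F and the total mass A
  set F : ℝ → ℝ := fun t => ∫ τ in t₀..t, f τ with hFdef
  set A : ℝ := ∫ τ in t₀..T, f τ with hAdef
  have hψF : ∀ u ∈ Ico t₀ T, ψ u = A - F u := by
    intro u h
    have := intervalIntegral.integral_add_adjacent_intervals (hII' u h) (hII u h)
    rw [hψ_eq u h]
    rw [hAdef]
    linarith [this]
  have hF_deriv : ∀ u ∈ Ioo t₀ T, HasDerivAt F (f u) u := by
    intro u h
    have hco : ContinuousAt f u :=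
      hf_cont.continuousAt (Ico_mem_nhds h.1 h.2)
    exact intervalIntegral.integral_hasDerivAt_right (hII' u ⟨h.1.le, h.2⟩)
      (ContinuousOn.stronglyMeasurableAtFilter isOpen_Ioo
        (hf_cont.mono Ioo_subset_Ico_self) u h) hco
  -- the decreasing quantity G
  set G : ℝ → ℝ := fun u => (A - F u)^3 + 3/K^2 * u with hGdef
  have hG_deriv : ∀ u ∈ Ioo t₀ T,
      HasDerivAt G (3 * (A - F u)^2 * (-(f u)) + 3/K^2) u := by
    intro u h
    have h2 : HasDerivAt (fun x => A - F x) (-(f u)) u := by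
      exact ((hasDerivAt_const u A).sub (hF_deriv u h)).congr_deriv (by ring)
    have h3 : HasDerivAt (fun x => (A - F x)^3) (3 * (A - F u)^2 * (-(f u))) u := by
      exact (h2.pow 3).congr_deriv (by norm_num)
    have h4 : HasDerivAt (fun x : ℝ => 3/K^2 * x) (3/K^2) u := by
      simpa using (hasDerivAt_id u).const_mul (3/K^2)
    exact h3.add h4
  -- Step A : G is antitone on subintervals
  have hA_step : ∀ t ∈ Ioo t₀ T, ∀ s ∈ Ioo t T, ψ s ^ 3 + 3/K^2 * (s - t) ≤ ψ t ^ 3 := by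
    intro t htm s hsm
    have hsub : Icc t s ⊆ Ioo t₀ T := fun x hx => ⟨lt_of_lt_of_le htm.1 hx.1,
      lt_of_le_of_lt hx.2 hsm.2⟩
    have hanti : AntitoneOn G (Icc t s) := by
      apply antitoneOn_of_deriv_nonpos (convex_Icc t s)
      · intro u hu
        exact (hG_deriv u (hsub hu)).differentiableAt.continuousAt.continuousWithinAt
      · intro u hu
        rw [interior_Icc] at hu
        exact ((hG_deriv u (hsub (Ioo_subset_Icc_self hu))).differentiableAt).differentiableWithinAt
      · intro u hu
        rw [interior_Icc] at hu
        have hu' := hsub (Ioo_subset_Icc_self hu)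
        rw [(hG_deriv u hu').deriv]
        have hk := hkey u ⟨hu'.1.le, hu'.2⟩
        have hpsiu : ψ u = A - F u := hψF u ⟨hu'.1.le, hu'.2⟩
        have heq : 3 * (A - F u)^2 * (-(f u)) + 3/K^2 = 3/K^2 - 3*(ψ u^2 * f u) := by
          rw [hpsiu]; ring
        rw [heq, show (3:ℝ)/K^2 = 3*(1/K^2) by ring]
        linarith
    have := hanti (left_mem_Icc.mpr hsm.1.le) (right_mem_Icc.mpr hsm.1.le) hsm.1.le
    rw [hGdef] at this
    simp only at this
    have ht' : ψ t = A - F t := hψF t ⟨htm.1.le, htm.2⟩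
    have hs' : ψ s = A - F s := hψF s ⟨le_trans htm.1.le hsm.1.le, hsm.2⟩
    rw [← ht', ← hs'] at this
    linarith
  -- Step B : pass to the limit s → T
  have hB : ∀ t ∈ Ioo t₀ T, 3/K^2 * (T - t) ≤ ψ t ^ 3 := by
    intro t htm
    have hne : (𝓝[<] T).NeBot := nhdsLT_neBot T
    refine le_of_tendsto (x := 𝓝[<] T) (f := fun s => 3/K^2 * (s - t)) ?_ ?_
    · have hct : ContinuousAt (fun s : ℝ => 3/K^2 * (s - t)) T := by fun_prop
      exact hct.tendsto.mono_left nhdsWithin_le_nhds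
    · filter_upwards [Ioo_mem_nhdsLT_of_mem (⟨htm.2, le_refl T⟩ : T ∈ Ioc t T)] with s hs
      have h1 := hA_step t htm s hs
      have h2 : 0 ≤ ψ s := hψ_nonneg s ⟨le_trans htm.1.le hs.1.le, hs.2⟩
      nlinarith [pow_nonneg h2 3]
  -- Step C : extend to all of [t₀, T) by monotonicity of ψ and a limit t' → t⁺
  have hC : ∀ t ∈ Ico t₀ T, 3/K^2 * (T - t) ≤ ψ t ^ 3 := by
    intro t htm
    have hne : (𝓝[>] t).NeBot := nhdsGT_neBot t
    refine le_of_tendsto (x := 𝓝[>] t) (f := fun t' => 3/K^2 * (T - t')) ?_ ?_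
    · have hct : ContinuousAt (fun t' : ℝ => 3/K^2 * (T - t')) t := by fun_prop
      exact hct.tendsto.mono_left nhdsWithin_le_nhds
    · filter_upwards [Ioo_mem_nhdsGT_of_mem (⟨le_refl t, htm.2⟩ : t ∈ Ico t T)] with t' ht'
      have ht'm : t' ∈ Ioo t₀ T := ⟨lt_of_le_of_lt htm.1 ht'.1, ht'.2⟩
      have h1 := hB t' ht'm
      have hmono : ψ t' ≤ ψ t := by
        apply setIntegral_mono_set (hint t htm)
        · refine (ae_restrict_iff' measurableSet_Ioo).mpr (ae_of_all _ ?_)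
          intro τ hτ
          exact (hf_pos τ ⟨le_trans htm.1 hτ.1.le, hτ.2⟩).le
        · exact HasSubset.Subset.eventuallyLE (Ioo_subset_Ioo_left ht'.1.le)
      have h2 : 0 ≤ ψ t' := hψ_nonneg t' ⟨ht'm.1.le, ht'm.2⟩
      nlinarith [pow_le_pow_left₀ h2 hmono 3]
  constructor
  · -- Part 1
    intro t htm
    have h0 : (0:ℝ) ≤ 3/K^2 * (T - t) := by
      have := sub_nonneg.mpr htm.2.le
      positivity
    have hψn := hψ_nonneg t htm
    calc (3 / K^2) ^ ((1:ℝ)/3) * (T - t) ^ ((1:ℝ)/3)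
        = (3/K^2 * (T - t)) ^ ((1:ℝ)/3) := (Real.mul_rpow (by positivity) (sub_nonneg.mpr htm.2.le)).symm
      _ ≤ (ψ t ^ 3) ^ ((1:ℝ)/3) := Real.rpow_le_rpow h0 (hC t htm) (by norm_num)
      _ = ψ t := by
          rw [← Real.rpow_natCast (ψ t) 3, ← Real.rpow_mul hψn]
          norm_num
  · -- Part 2
    set C : ℝ := (3 * K) ^ ((4:ℝ)/3) with hCdef
    have hCpos : 0 < C := by positivity
    have claim : ∀ s ∈ Ico t₀ T, ∃ u, u ∈ Ico s T ∧ lam u ≤ C * (T - u) ^ ((4:ℝ)/3) := by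
      intro s hs
      by_contra hcon
      push_neg at hcon
      -- pointwise bound on f on (s, T)
      have hfb : ∀ τ ∈ Ioo s T, f τ ≤ C ^ (-(1:ℝ)/2) * (T - τ) ^ (-(2:ℝ)/3) := by
        intro τ hτ
        have hτm : τ ∈ Ico t₀ T := ⟨le_trans hs.1 hτ.1.le, hτ.2⟩
        have hTτ : 0 < T - τ := sub_pos.mpr hτ.2
        have hb : 0 < C * (T - τ) ^ ((4:ℝ)/3) := by positivity
        have hlt : C * (T - τ) ^ ((4:ℝ)/3) ≤ lam τ := (hcon τ ⟨hτ.1.le, hτ.2⟩).le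
        have h1 : lam τ ^ (-(1:ℝ)/2) ≤ (C * (T - τ) ^ ((4:ℝ)/3)) ^ (-(1:ℝ)/2) :=
          Real.rpow_le_rpow_of_nonpos hb hlt (by norm_num)
        calc f τ ≤ (C * (T - τ) ^ ((4:ℝ)/3)) ^ (-(1:ℝ)/2) := h1
          _ = C ^ (-(1:ℝ)/2) * (T - τ) ^ (-(2:ℝ)/3) := by
              rw [Real.mul_rpow hCpos.le (by positivity), ← Real.rpow_mul hTτ.le]
              norm_num
      -- integrability of the majorant
      have hgint : IntegrableOn (fun τ => C ^ (-(1:ℝ)/2) * (T - τ) ^ (-(2:ℝ)/3)) (Ioo s T) volume := by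
        have h1 : IntervalIntegrable (fun x : ℝ => x ^ (-(2:ℝ)/3)) volume 0 (T - s) := by
          have : (-1:ℝ) < -(2:ℝ)/3 := by norm_num
          exact intervalIntegral.intervalIntegrable_rpow' this
        have h2 : IntervalIntegrable (fun x : ℝ => (T - x) ^ (-(2:ℝ)/3)) volume s T := by
          have h2' := h1.comp_sub_left T
          simp only [sub_zero, sub_sub_cancel] at h2'
          exact h2'.symm
        have h3 := (h2.const_mul (C ^ (-(1:ℝ)/2)))
        exact (intervalIntegrable_iff_integrableOn_Ioo_of_le hs.2.le).mp h3
      -- bound on ψ s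
      have hψb : ψ s ≤ 3 * C ^ (-(1:ℝ)/2) * (T - s) ^ ((1:ℝ)/3) := by
        have h1 : ψ s ≤ ∫ τ in Ioo s T, C ^ (-(1:ℝ)/2) * (T - τ) ^ (-(2:ℝ)/3) := by
          apply setIntegral_mono_on (hint s hs) hgint measurableSet_Ioo hfb
        have h2 : (∫ τ in Ioo s T, C ^ (-(1:ℝ)/2) * (T - τ) ^ (-(2:ℝ)/3))
            = 3 * C ^ (-(1:ℝ)/2) * (T - s) ^ ((1:ℝ)/3) := by
          rw [← integral_Ioc_eq_integral_Ioo, ← intervalIntegral.integral_of_le hs.2.le]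
          rw [intervalIntegral.integral_const_mul]
          have h3 : (∫ τ in s..T, (T - τ) ^ (-(2:ℝ)/3))
              = ∫ x in (0:ℝ)..(T - s), x ^ (-(2:ℝ)/3) := by
            have := intervalIntegral.integral_comp_sub_left (fun x : ℝ => x ^ (-(2:ℝ)/3)) T
              (a := s) (b := T)
            simpa using this
          rw [h3, integral_rpow (Or.inl (by norm_num)), Real.zero_rpow (by norm_num),
            show (-(2:ℝ)/3 + 1) = (1:ℝ)/3 by norm_num]
          ring
        linarith [h1, h2.le, h2.ge]
      -- derive the contradiction at t = s
      have hTs : 0 < T - s := sub_pos.mpr hs.2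
      have h1 : lam s ^ ((1:ℝ)/4) ≤ K * (3 * C ^ (-(1:ℝ)/2) * (T - s) ^ ((1:ℝ)/3)) := by
        have := hineq s hs
        have hKψ : K * ψ s ≤ K * (3 * C ^ (-(1:ℝ)/2) * (T - s) ^ ((1:ℝ)/3)) :=
          mul_le_mul_of_nonneg_left hψb hK.le
        linarith
      have h2 : (C * (T - s) ^ ((4:ℝ)/3)) ^ ((1:ℝ)/4) < lam s ^ ((1:ℝ)/4) :=
        Real.rpow_lt_rpow (by positivity) (hcon s ⟨le_refl s, hs.2⟩) (by norm_num)
      have h3 : (C * (T - s) ^ ((4:ℝ)/3)) ^ ((1:ℝ)/4)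
          = C ^ ((1:ℝ)/4) * (T - s) ^ ((1:ℝ)/3) := by
        rw [Real.mul_rpow hCpos.le (by positivity), ← Real.rpow_mul hTs.le]
        norm_num
      have h4 : C ^ ((1:ℝ)/4) * (T - s) ^ ((1:ℝ)/3)
          < 3 * K * C ^ (-(1:ℝ)/2) * (T - s) ^ ((1:ℝ)/3) := by
        calc C ^ ((1:ℝ)/4) * (T - s) ^ ((1:ℝ)/3)
            = (C * (T - s) ^ ((4:ℝ)/3)) ^ ((1:ℝ)/4) := h3.symm
          _ < lam s ^ ((1:ℝ)/4) := h2
          _ ≤ K * (3 * C ^ (-(1:ℝ)/2) * (T - s) ^ ((1:ℝ)/3)) := h1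
          _ = 3 * K * C ^ (-(1:ℝ)/2) * (T - s) ^ ((1:ℝ)/3) := by ring
      have hTs3 : (0:ℝ) < (T - s) ^ ((1:ℝ)/3) := Real.rpow_pos_of_pos hTs _
      have h5 : C ^ ((1:ℝ)/4) < 3 * K * C ^ (-(1:ℝ)/2) :=
        lt_of_mul_lt_mul_right h4 hTs3.le
      -- multiply both sides by C^{1/2}
      have h6 : C ^ ((1:ℝ)/4) * C ^ ((1:ℝ)/2) < 3 * K * C ^ (-(1:ℝ)/2) * C ^ ((1:ℝ)/2) := by
        have := Real.rpow_pos_of_pos hCpos ((1:ℝ)/2)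
        exact mul_lt_mul_of_pos_right h5 this
      rw [← Real.rpow_add hCpos, mul_assoc, ← Real.rpow_add hCpos] at h6
      norm_num at h6
      -- h6 : C ^ (3/4) < 3 * K   (after simplification)
      have h7 : C ^ ((3:ℝ)/4) = 3 * K := by
        rw [hCdef, ← Real.rpow_mul (by positivity)]
        norm_num
      rw [h7] at h6
      exact lt_irrefl _ h6
    -- build the sequence
    have hseq : ∀ n : ℕ, ∃ u, u ∈ Ico t₀ T ∧ T - u ≤ (T - t₀)/(n+1) ∧
        lam u ≤ C * (T - u) ^ ((4:ℝ)/3) := by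
      intro n
      have hden : (0:ℝ) < (T - t₀)/(n+1) := by
        have : (0:ℝ) < T - t₀ := sub_pos.mpr ht
        positivity
      set s : ℝ := max t₀ (T - (T - t₀)/(n+1)) with hsdef
      have hs1 : t₀ ≤ s := le_max_left _ _
      have hs2 : s < T := max_lt ht (by linarith)
      obtain ⟨u, hu, hle⟩ := claim s ⟨hs1, hs2⟩
      refine ⟨u, ⟨le_trans hs1 hu.1, hu.2⟩, ?_, hle⟩
      have := le_max_right t₀ (T - (T - t₀)/(n+1))
      have := hu.1
      simp only [hsdef] at this ⊢
      linarith [le_max_right t₀ (T - (T - t₀)/(n+1)), hu.1]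
    choose tseq h1 h2 h3 using hseq
    refine ⟨C, hCpos, tseq, h1, ?_, h3⟩
    -- tendsto
    have hlow : Tendsto (fun n : ℕ => T - (T - t₀)/(n+1)) atTop (nhds T) := by
      have h4 : Tendsto (fun n : ℕ => (T - t₀)/(n+1)) atTop (nhds 0) := by
        have := tendsto_one_div_add_atTop_nhds_zero_nat (𝕜 := ℝ)
        have h5 := this.const_mul (T - t₀)
        simp only [mul_one_div] at h5
        convert h5 using 2 with n
        push_cast
        ring
      have := tendsto_const_nhds (x := T) (f := atTop (α := ℕ)) |>.sub h4
      simpa using this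
    have hupp : Tendsto (fun _ : ℕ => T) atTop (nhds T) := tendsto_const_nhds
    apply tendsto_of_tendsto_of_tendsto_of_le_of_le hlow hupp
    · intro n
      have := h2 n
      linarith
    · intro n
      exact (h1 n).2.le
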